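/- The set of Pythagorean triples is exactly the set of integer triples in the image of T: ℤ³ → ℚ³, T(a,b,c) = (c(a²−b²)/2, cab, c(a²+b²)/2). -/

import Mathlib

lemma key_dvd (u y v : ℤ) (hu : u ≠ 0) (h : y ^ 2 = u * v) :
    u ∣ (Int.gcd u y : ℤ) ^ 2 := by
  set g : ℤ := (Int.gcd u y : ℤ) with hg
  have hgpos : 0 < Int.gcd u y := Int.gcd_pos_of_ne_zero_left y hu
  have hgne : g ≠ 0 := by positivity
  obtain ⟨u₁, hu₁⟩ : g ∣ u := Int.gcd_dvd_left u y
  obtain ⟨y₁, hy₁⟩ : g ∣ y := Int.gcd_dvd_right u y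
  have hcop : IsCoprime u₁ y₁ := by
    rw [Int.isCoprime_iff_gcd_eq_one]
    have e1 : u₁ = u / g := by rw [hu₁, Int.mul_ediv_cancel_left _ hgne]
    have e2 : y₁ = y / g := by rw [hy₁, Int.mul_ediv_cancel_left _ hgne]
    rw [e1, e2, hg]
    exact Int.gcd_div_gcd_div_gcd hgpos
  -- g * y₁^2 = u₁ * v
  have hkey : g * y₁ ^ 2 = u₁ * v := by
    have h2 : g * (g * y₁ ^ 2) = g * (u₁ * v) := by
      rw [hu₁, hy₁] at h; ring_nf at h ⊢; linarith
    exact mul_left_cancel₀ hgne h2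
  have hdvd : u₁ ∣ g := by
    have : u₁ ∣ g * y₁ ^ 2 := ⟨v, hkey⟩
    have hcop2 : IsCoprime u₁ (y₁ ^ 2) := hcop.pow_right
    exact hcop2.dvd_of_dvd_mul_right this
  obtain ⟨k, hk⟩ := hdvd
  exact ⟨k, by rw [hu₁, hk]; ring⟩

theorem pythagorean_iff_in_image_T (x y z : ℤ) :
    x ^ 2 + y ^ 2 = z ^ 2 ↔
      ∃ a b c : ℤ,
        (x : ℚ) = (c : ℚ) * ((a : ℚ) ^ 2 - (b : ℚ) ^ 2) / 2 ∧
        (y : ℚ) = (c : ℚ) * (a : ℚ) * (b : ℚ) ∧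
        (z : ℚ) = (c : ℚ) * ((a : ℚ) ^ 2 + (b : ℚ) ^ 2) / 2 := by
  constructor
  · intro h
    by_cases hu : x + z = 0
    · -- degenerate: y = 0, x = -z
      have hx : x = -z := by linarith
      have hy2 : y ^ 2 = 0 := by
        have hz2 : (-z) ^ 2 = z ^ 2 := by ring
        rw [hx] at h; linarith
      have hy : y = 0 := pow_eq_zero_iff (by norm_num : (2:ℕ) ≠ 0) |>.mp hy2
      refine ⟨0, 1, 2 * z, ?_, ?_, ?_⟩ <;> push_cast [hx, hy] <;> ring
    · set u : ℤ := x + z with hud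
      have hyy : y ^ 2 = u * (z - x) := by rw [hud]; ring_nf; linarith
      have hgdvd : u ∣ (Int.gcd u y : ℤ) ^ 2 := key_dvd u y (z - x) hu hyy
      set d : ℤ := (Int.gcd u y : ℤ) with hdd
      have hdne : d ≠ 0 := by
        have := Int.gcd_pos_of_ne_zero_left y hu
        simp only [hdd]; positivity
      obtain ⟨a, ha⟩ : d ∣ u := Int.gcd_dvd_left u y
      obtain ⟨b, hb⟩ : d ∣ y := Int.gcd_dvd_right u y
      obtain ⟨c, hc⟩ := hgdvd
      have hd2 : d ^ 2 ≠ 0 := pow_ne_zero _ hdne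
      have h1 : c * a ^ 2 = x + z := by
        apply mul_left_cancel₀ hd2
        calc d ^ 2 * (c * a ^ 2) = c * (d * a) ^ 2 := by ring
          _ = c * u ^ 2 := by rw [← ha]
          _ = d ^ 2 * u := by rw [hc]; ring
          _ = d ^ 2 * (x + z) := by rw [hud]
      have h2 : c * a * b = y := by
        apply mul_left_cancel₀ hd2
        calc d ^ 2 * (c * a * b) = c * (d * a) * (d * b) := by ring
          _ = c * u * y := by rw [← ha, ← hb]
          _ = d ^ 2 * y := by rw [hc]; ring
      have h3 : c * b ^ 2 = z - x := by
        apply mul_left_cancel₀ hd2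
        calc d ^ 2 * (c * b ^ 2) = c * (d * b) ^ 2 := by ring
          _ = c * y ^ 2 := by rw [← hb]
          _ = c * (u * (z - x)) := by rw [hyy]
          _ = d ^ 2 * (z - x) := by rw [hc]; ring
      have H1 : (c : ℚ) * (a : ℚ) ^ 2 = (x : ℚ) + (z : ℚ) := by exact_mod_cast h1
      have H2 : (c : ℚ) * (a : ℚ) * (b : ℚ) = (y : ℚ) := by exact_mod_cast h2
      have H3 : (c : ℚ) * (b : ℚ) ^ 2 = (z : ℚ) - (x : ℚ) := by exact_mod_cast h3
      refine ⟨a, b, c, ?_, H2.symm, ?_⟩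
      · rw [eq_div_iff (by norm_num : (2:ℚ) ≠ 0)]
        linear_combination H3 - H1
      · rw [eq_div_iff (by norm_num : (2:ℚ) ≠ 0)]
        linear_combination -(H1 + H3)
  · rintro ⟨a, b, c, hx, hy, hz⟩
    have hq : (x : ℚ) ^ 2 + (y : ℚ) ^ 2 = (z : ℚ) ^ 2 := by
      rw [hx, hy, hz]; ring
    exact_mod_cast hq
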